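/- There exists a constant c_1(r) depending only on r such that for all natural numbers n > 1, H(r,n) ≤ 2^(r·ν(n)) / (2^r · r!) + c_1(r) · 2^((r-1)·ν(n)). -/

import Mathlib

open Polynomial Finset ArithmeticFunction

namespace HProof




/-- The power series `∑_{k ∣ i} x^i`. -/
noncomputable def g (k : ℕ) : PowerSeries ℤ := PowerSeries.mk fun i => if k ∣ i then 1 else 0

lemma coeff_g (k i : ℕ) : (PowerSeries.coeff i) (g k) = if k ∣ i then 1 else 0 :=
  PowerSeries.coeff_mk _ _

/-- nonnegative coefficients -/
def NN (f : PowerSeries ℤ) : Prop := ∀ i, 0 ≤ PowerSeries.coeff i f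

lemma NN.one : NN 1 := by
  intro i; rw [PowerSeries.coeff_one]; split <;> norm_num

lemma NN.mul {f h : PowerSeries ℤ} (hf : NN f) (hh : NN h) : NN (f * h) := by
  intro i
  rw [PowerSeries.coeff_mul]
  exact Finset.sum_nonneg fun p _ => mul_nonneg (hf p.1) (hh p.2)

lemma NN.g (k : ℕ) : NN (g k) := by
  intro i; rw [coeff_g]; split <;> norm_num

lemma NN.pow {f : PowerSeries ℤ} (hf : NN f) (a : ℕ) : NN (f ^ a) := by
  induction a with
  | zero => simpa using NN.one
  | succ a ih => rw [pow_succ]; exact ih.mul hf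

lemma NN.prod {ι : Type*} {s : Finset ι} {f : ι → PowerSeries ℤ}
    (hf : ∀ i ∈ s, NN (f i)) : NN (∏ i ∈ s, f i) := by
  classical
  induction s using Finset.induction_on with
  | empty => simpa using NN.one
  | insert _ _ hns ih =>
    rw [Finset.prod_insert hns]
    exact (hf _ (Finset.mem_insert_self _ _)).mul
      (ih fun i hi => hf i (Finset.mem_insert_of_mem hi))

/-- `Dom f h`: coefficients of `f` are dominated in absolute value by those of `h`. -/
def Dom (f h : PowerSeries ℤ) : Prop :=
  ∀ i, |PowerSeries.coeff i f| ≤ PowerSeries.coeff i h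

lemma Dom.one : Dom 1 1 := fun i => by rw [PowerSeries.coeff_one]; split <;> norm_num

lemma Dom.mul {f₁ f₂ h₁ h₂ : PowerSeries ℤ} (H1 : Dom f₁ h₁) (H2 : Dom f₂ h₂) :
    Dom (f₁ * f₂) (h₁ * h₂) := by
  intro i
  rw [PowerSeries.coeff_mul, PowerSeries.coeff_mul]
  refine (Finset.abs_sum_le_sum_abs _ _).trans (Finset.sum_le_sum fun p _ => ?_)
  rw [abs_mul]
  exact mul_le_mul (H1 p.1) (H2 p.2) (abs_nonneg _) ((abs_nonneg _).trans (H1 p.1))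

lemma Dom.pow {f h : PowerSeries ℤ} (H : Dom f h) (a : ℕ) : Dom (f ^ a) (h ^ a) := by
  induction a with
  | zero => simpa using Dom.one
  | succ a ih => rw [pow_succ, pow_succ]; exact ih.mul H

lemma Dom.prod {ι : Type*} {s : Finset ι} {f h : ι → PowerSeries ℤ}
    (H : ∀ i ∈ s, Dom (f i) (h i)) : Dom (∏ i ∈ s, f i) (∏ i ∈ s, h i) := by
  classical
  induction s using Finset.induction_on with
  | empty => simpa using Dom.one
  | insert _ _ hns ih =>
    rw [Finset.prod_insert hns, Finset.prod_insert hns]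
    exact (H _ (Finset.mem_insert_self _ _)).mul
      (ih fun i hi => H i (Finset.mem_insert_of_mem hi))



-- geometric sum bound
lemma geom_aux (c : ℤ) (hc : 1 ≤ c) (m : ℕ) :
    ∑ t ∈ range (m + 1), c ^ t ≤ (c + 1) ^ m := by
  induction m with
  | zero => simp
  | succ m ih =>
    rw [Finset.sum_range_succ, pow_succ (c + 1)]
    have h1 : c ^ (m + 1) ≤ c * (c + 1) ^ m := by
      rw [pow_succ, mul_comm]
      exact mul_le_mul_of_nonneg_left (pow_le_pow_left₀ (by linarith) (by linarith) m)
        (by linarith)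
    calc ∑ t ∈ range (m + 1), c ^ t + c ^ (m + 1) ≤ (c + 1) ^ m + c * (c + 1) ^ m := by
          exact add_le_add ih h1
      _ = (c + 1) ^ m * (c + 1) := by ring

lemma coeff_zero_g_pow (k a : ℕ) : (PowerSeries.coeff 0) (g k ^ a) = 1 := by
  rw [PowerSeries.coeff_zero_eq_constantCoeff, map_pow]
  have : (PowerSeries.constantCoeff) (g k) = 1 := by
    rw [← PowerSeries.coeff_zero_eq_constantCoeff, coeff_g]; simp
  rw [this, one_pow]

lemma coeff_g_pow_eq_zero {k i : ℕ} (a : ℕ) (h : ¬ k ∣ i) :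
    (PowerSeries.coeff i) (g k ^ a) = 0 := by
  induction a generalizing i with
  | zero =>
    have : i ≠ 0 := fun hi => h (hi ▸ dvd_zero k)
    simp [PowerSeries.coeff_one, this]
  | succ a ih =>
    rw [pow_succ, mul_comm, PowerSeries.coeff_mul]
    refine Finset.sum_eq_zero fun p hp => ?_
    have hpi := Finset.HasAntidiagonal.mem_antidiagonal.1 hp
    subst hpi
    by_cases h1 : k ∣ p.1
    · have h2 : ¬ k ∣ p.2 := fun h2 => h (h1.add h2)
      rw [ih h2, mul_zero]
    · rw [coeff_g, if_neg h1, zero_mul]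

lemma coeff_g_pow_le {k : ℕ} (hk : 1 ≤ k) (a : ℕ) (i : ℕ) :
    (PowerSeries.coeff i) (g k ^ a) ≤ ((a : ℤ) + 1) ^ (i / k) := by
  induction a generalizing i with
  | zero =>
    rw [pow_zero, PowerSeries.coeff_one]
    split
    · simp
    · positivity
  | succ a ih =>
    rw [pow_succ, mul_comm, PowerSeries.coeff_mul]
    have habs : ∀ p : ℕ × ℕ, p ∈ Finset.HasAntidiagonal.antidiagonal i →
        (PowerSeries.coeff p.1) (g k) * (PowerSeries.coeff p.2) (g k ^ a) ≤
          if k ∣ p.1 ∧ k ∣ p.2 then ((a : ℤ) + 1) ^ (p.2 / k) else 0 := by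
      intro p _
      rw [coeff_g]
      by_cases h1 : k ∣ p.1
      · by_cases h2 : k ∣ p.2
        · rw [if_pos h1, one_mul, if_pos ⟨h1, h2⟩]; exact ih p.2
        · rw [coeff_g_pow_eq_zero a h2, mul_zero, if_neg (fun hc => h2 hc.2)]
      · rw [if_neg h1, zero_mul, if_neg (fun hc => h1 hc.1)]
    refine (Finset.sum_le_sum habs).trans ?_
    rw [Finset.sum_ite, Finset.sum_const_zero, add_zero]
    set s := (Finset.HasAntidiagonal.antidiagonal i).filter (fun p => k ∣ p.1 ∧ k ∣ p.2) with hs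
    have himg : ∀ p ∈ s, p.2 / k ∈ range (i / k + 1) := by
      intro p hp
      obtain ⟨hp1, -⟩ := Finset.mem_filter.1 hp
      have := Finset.HasAntidiagonal.mem_antidiagonal.1 hp1
      rw [Finset.mem_range, Nat.lt_succ_iff]
      exact Nat.div_le_div_right (by omega)
    have hinj : ∀ p ∈ s, ∀ q ∈ s, p.2 / k = q.2 / k → p = q := by
      intro p hp q hq hpq
      obtain ⟨hp1, -, hp3⟩ := Finset.mem_filter.1 hp
      obtain ⟨hq1, -, hq3⟩ := Finset.mem_filter.1 hq
      have hpe := Finset.HasAntidiagonal.mem_antidiagonal.1 hp1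
      have hqe := Finset.HasAntidiagonal.mem_antidiagonal.1 hq1
      have h2 : p.2 = q.2 := by
        rw [← Nat.div_mul_cancel hp3, ← Nat.div_mul_cancel hq3, hpq]
      have h1 : p.1 = q.1 := by omega
      exact Prod.ext h1 h2
    calc ∑ p ∈ s, ((a : ℤ) + 1) ^ (p.2 / k)
        = ∑ t ∈ s.image (fun p => p.2 / k), ((a : ℤ) + 1) ^ t := by
          rw [Finset.sum_image hinj]
      _ ≤ ∑ t ∈ range (i / k + 1), ((a : ℤ) + 1) ^ t := by
          refine Finset.sum_le_sum_of_subset_of_nonneg ?_ (fun t _ _ => by positivity)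
          intro t ht
          rcases Finset.mem_image.1 ht with ⟨p, hp, rfl⟩
          exact himg p hp
      _ ≤ ((a : ℤ) + 1 + 1) ^ (i / k) := geom_aux _ (by omega) _
      _ = (((a + 1 : ℕ) : ℤ) + 1) ^ (i / k) := by push_cast; ring

lemma coeff_g_one_pow_le (a i : ℕ) :
    (PowerSeries.coeff i) (g 1 ^ a) ≤ ((a + i).choose i : ℤ) := by
  induction a generalizing i with
  | zero =>
    rw [pow_zero, PowerSeries.coeff_one]
    split <;> simp [Nat.choose_self]
  | succ a ih =>
    rw [pow_succ, mul_comm, PowerSeries.coeff_mul]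
    have : ∀ p : ℕ × ℕ, p ∈ Finset.HasAntidiagonal.antidiagonal i →
        (PowerSeries.coeff p.1) (g 1) * (PowerSeries.coeff p.2) (g 1 ^ a) ≤
          ((a + p.2).choose p.2 : ℤ) := by
      intro p _
      rw [coeff_g, if_pos (one_dvd _), one_mul]
      exact ih p.2
    refine (Finset.sum_le_sum this).trans ?_
    rw [Finset.Nat.sum_antidiagonal_eq_sum_range_succ (fun x y => ((a + y).choose y : ℤ))]
    have hnat : ∑ j ∈ range (i + 1), (a + (i - j)).choose (i - j) = (a + 1 + i).choose i := by
      have hrefl := Finset.sum_range_reflect (fun j => (a + j).choose j) (i + 1)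
      simp only [Nat.succ_sub_one] at hrefl
      rw [hrefl]
      have h1 : ∀ j, (a + j).choose j = (a + j).choose a := by
        intro j
        rw [← Nat.choose_symm (Nat.le_add_right a j), Nat.add_sub_cancel_left]
      simp only [h1]
      simp only [show ∀ j, a + j = j + a from fun j => Nat.add_comm a j]
      rw [Nat.sum_range_add_choose i a]
      have hsymm := Nat.choose_symm (show a + 1 ≤ i + a + 1 by omega)
      have : i + a + 1 - (a + 1) = i := by omega
      rw [this] at hsymm
      rw [← hsymm]
      congr 1
      omega
    have : (((a + 1 + i).choose i : ℕ) : ℤ) = (((a:ℕ) + 1 + i).choose i : ℤ) := by norm_cast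
    refine le_of_eq ?_
    rw [← this]
    exact_mod_cast hnat


/-- In a UFD, a divisor of a product of primes is associated to a subproduct. -/
lemma exists_subset_associated {α : Type*} [CommMonoidWithZero α]
    [UniqueFactorizationMonoid α] {ι : Type*} [DecidableEq ι] {s : Finset ι} {p : ι → α}
    (hp : ∀ i ∈ s, Prime (p i)) {d : α} (hd : d ∣ ∏ i ∈ s, p i) :
    ∃ t ⊆ s, Associated d (∏ i ∈ t, p i) := by
  classical
  letI := UniqueFactorizationMonoid.toGCDMonoid α
  induction s using Finset.induction_on generalizing d with
  | empty =>
    refine ⟨∅, Finset.Subset.rfl, ?_⟩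
    rw [Finset.prod_empty] at hd ⊢
    exact associated_one_iff_isUnit.mpr (isUnit_of_dvd_one hd)
  | insert a s hns ih =>
    rw [Finset.prod_insert hns] at hd
    obtain ⟨d1, d2, h1, h2, rfl⟩ := exists_dvd_and_dvd_of_dvd_mul hd
    obtain ⟨t, hts, ht⟩ := ih (fun i hi => hp i (Finset.mem_insert_of_mem hi)) h2
    obtain ⟨c, hc⟩ := h1
    rcases (hp a (Finset.mem_insert_self a s)).irreducible.isUnit_or_isUnit hc with hu | hu
    · refine ⟨t, hts.trans (Finset.subset_insert a s), ?_⟩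
      have h1 : Associated d1 1 := associated_one_iff_isUnit.mpr hu
      simpa using h1.mul_mul ht
    · refine ⟨insert a t, Finset.insert_subset_insert a hts, ?_⟩
      have hat : a ∉ t := fun h => hns (hts h)
      rw [Finset.prod_insert hat]
      exact Associated.mul_mul ⟨hu.unit, hc.symm⟩ ht

/-- a divisor of `X^n - 1` is `±` a product of cyclotomics -/
lemma divisor_eq_prod_cyclotomic {n : ℕ} (hn : 0 < n) {d : Polynomial ℤ}
    (hd : d ∣ Polynomial.X ^ n - 1) :
    ∃ t ⊆ n.divisors, ∃ c : ℤ, (c = 1 ∨ c = -1) ∧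
      d * Polynomial.C c = ∏ m ∈ t, cyclotomic m ℤ := by
  rw [← prod_cyclotomic_eq_X_pow_sub_one hn] at hd
  have hp : ∀ m ∈ n.divisors, Prime (cyclotomic m ℤ) := fun m hm =>
    (UniqueFactorizationMonoid.irreducible_iff_prime).mp
      (cyclotomic.irreducible (Nat.pos_of_mem_divisors hm))
  obtain ⟨t, hts, u, hu⟩ := exists_subset_associated hp hd
  obtain ⟨c, hcu, hcc⟩ := Polynomial.isUnit_iff.mp u.isUnit
  refine ⟨t, hts, c, ?_, by rw [hcc, hu]⟩
  rcases Int.isUnit_iff.mp hcu with h | h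
  · left; exact h
  · right; exact h

noncomputable def Fu (k : ℕ) : (PowerSeries ℤ)ˣ :=
  if h : 0 < k then
    (PowerSeries.isUnit_iff_constantCoeff.mpr (by
      simp only [map_sub, map_pow, PowerSeries.constantCoeff_X, map_one,
        zero_pow h.ne', zero_sub]
      exact (isUnit_one.neg) ) : IsUnit ((PowerSeries.X : PowerSeries ℤ) ^ k - 1)).unit
  else 1

lemma Fu_val {k : ℕ} (hk : 0 < k) : (Fu k).val = (PowerSeries.X : PowerSeries ℤ) ^ k - 1 := by
  rw [Fu, dif_pos hk, IsUnit.unit_spec]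

lemma coe_X_pow_sub_one {m : ℕ} :
    ((Polynomial.X ^ m - 1 : Polynomial ℤ) : PowerSeries ℤ)
      = (PowerSeries.X : PowerSeries ℤ) ^ m - 1 := by
  push_cast
  rfl

lemma isUnit_coe_cyclotomic {m : ℕ} (hm : 0 < m) :
    IsUnit ((cyclotomic m ℤ : Polynomial ℤ) : PowerSeries ℤ) := by
  refine isUnit_of_dvd_unit (y := ((Polynomial.X ^ m - 1 : Polynomial ℤ) : PowerSeries ℤ)) ?_ ?_
  · exact (Polynomial.coeToPowerSeries.ringHom (R := ℤ)).map_dvd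
      (cyclotomic.dvd_X_pow_sub_one m ℤ)
  · rw [coe_X_pow_sub_one, ← Fu_val hm]
    exact (Fu m).isUnit

noncomputable def Gu (m : ℕ) : (PowerSeries ℤ)ˣ :=
  if h : 0 < m then (isUnit_coe_cyclotomic h).unit else 1

lemma Gu_val {m : ℕ} (hm : 0 < m) :
    (Gu m).val = ((cyclotomic m ℤ : Polynomial ℤ) : PowerSeries ℤ) := by
  rw [Gu, dif_pos hm, IsUnit.unit_spec]

lemma prod_Gu_eq_Fu : ∀ m : ℕ, 0 < m → ∏ i ∈ m.divisors, Gu i = Fu m := by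
  intro m hm
  apply Units.ext
  have hcoe : (↑(∏ i ∈ m.divisors, Gu i) : PowerSeries ℤ) = ∏ i ∈ m.divisors, (Gu i).val :=
    map_prod (Units.coeHom (PowerSeries ℤ)) _ _
  have hcoe2 : ((∏ i ∈ m.divisors, cyclotomic i ℤ : Polynomial ℤ) : PowerSeries ℤ)
      = ∏ i ∈ m.divisors, ((cyclotomic i ℤ : Polynomial ℤ) : PowerSeries ℤ) := by
    have h3 := map_prod (Polynomial.coeToPowerSeries.ringHom (R := ℤ))
      (fun i => cyclotomic i ℤ) m.divisors
    simp only [Polynomial.coeToPowerSeries.ringHom_apply] at h3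
    exact h3
  rw [hcoe, Fu_val hm, ← coe_X_pow_sub_one, ← prod_cyclotomic_eq_X_pow_sub_one hm, hcoe2]
  exact Finset.prod_congr rfl fun i hi => Gu_val (Nat.pos_of_mem_divisors hi)

lemma Gu_eq_prod_Fu {m : ℕ} (hm : 0 < m) :
    Gu m = ∏ x ∈ m.divisorsAntidiagonal, Fu x.2 ^ (ArithmeticFunction.moebius x.1) := by
  exact ((ArithmeticFunction.prod_eq_iff_prod_pow_moebius_eq
    (f := Gu) (g := Fu)).mp prod_Gu_eq_Fu m hm).symm

/-- `a ^ (∑ f)` as a product, for `zpow` in a commutative group. -/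
lemma zpow_finset_sum {G : Type*} [CommGroup G] (a : G) {ι : Type*} [DecidableEq ι]
    (s : Finset ι) (f : ι → ℤ) : a ^ (∑ i ∈ s, f i) = ∏ i ∈ s, a ^ f i := by
  induction s using Finset.induction_on with
  | empty => simp
  | insert _ _ hns ih => rw [Finset.sum_insert hns, Finset.prod_insert hns, zpow_add, ih]


/-- the exponent of `X^k - 1` in a subproduct of cyclotomics -/
noncomputable def Ee (S : Finset ℕ) (k : ℕ) : ℤ :=
  ∑ m ∈ S, if k ∣ m then ArithmeticFunction.moebius (m / k) else 0

lemma prod_Gu_S {n : ℕ} (hn : 0 < n) {S : Finset ℕ} (hS : S ⊆ n.divisors) :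
    ∏ m ∈ S, Gu m = ∏ k ∈ n.divisors, Fu k ^ (Ee S k) := by
  have step1 : ∀ m ∈ S, Gu m
      = ∏ k ∈ n.divisors, Fu k ^ (if k ∣ m then moebius (m / k) else (0 : ℤ)) := by
    intro m hm
    have hm0 : 0 < m := Nat.pos_of_mem_divisors (hS hm)
    rw [Gu_eq_prod_Fu hm0,
      Nat.prod_divisorsAntidiagonal' (f := fun a b => Fu b ^ (moebius a : ℤ))]
    have hcongr : ∀ i ∈ m.divisors,
        Fu i ^ (moebius (m / i) : ℤ) = Fu i ^ (if i ∣ m then moebius (m / i) else (0:ℤ)) := by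
      intro i hi
      rw [if_pos (Nat.dvd_of_mem_divisors hi)]
    rw [Finset.prod_congr rfl hcongr]
    refine Finset.prod_subset (Nat.divisors_subset_of_dvd hn.ne'
      (Nat.dvd_of_mem_divisors (hS hm))) ?_
    intro x hx hxm
    have : ¬ x ∣ m := fun hdvd => hxm (Nat.mem_divisors.mpr ⟨hdvd, hm0.ne'⟩)
    rw [if_neg this, zpow_zero]
  rw [Finset.prod_congr rfl step1, Finset.prod_comm]
  exact Finset.prod_congr rfl fun k _ => (zpow_finset_sum (Fu k) S _).symm

lemma card_squarefree_divisors {n : ℕ} (hn : n ≠ 0) :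
    (n.divisors.filter Squarefree).card = 2 ^ n.primeFactors.card := by
  classical
  have h := Nat.sum_divisors_filter_squarefree hn (f := fun _ => (1 : ℕ))
  simp only [Finset.sum_const, smul_eq_mul, mul_one] at h
  rw [h, Finset.card_powerset]
  congr 1
  rw [Nat.factors_eq n, List.toFinset_coe, Nat.toFinset_factors]

lemma sum_moebius_eq_zero {n : ℕ} (hn : 1 < n) :
    ∑ d ∈ n.divisors, (moebius d : ℤ) = 0 := by
  have h := ArithmeticFunction.coe_mul_zeta_apply (f := (moebius : ArithmeticFunction ℤ)) (x := n)
  rw [ArithmeticFunction.moebius_mul_coe_zeta, ArithmeticFunction.one_apply] at h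
  rw [← h, if_neg (by omega : n ≠ 1)]

lemma moebius_trichotomy (m : ℕ) :
    moebius m = 1 ∨ moebius m = -1 ∨ moebius m = 0 := by
  by_cases h : Squarefree m
  · rw [moebius_apply_of_squarefree h]
    rcases Nat.even_or_odd (cardFactors m) with he | ho
    · left; exact he.neg_one_pow
    · right; left; exact ho.neg_one_pow
  · right; right; exact moebius_eq_zero_of_not_squarefree h

lemma sum_moebius_card (T : Finset ℕ) :
    ∑ m ∈ T, (moebius m : ℤ)
      = ((T.filter (fun m => moebius m = 1)).card : ℤ)
        - ((T.filter (fun m => moebius m = -1)).card : ℤ) := by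
  classical
  rw [← Finset.sum_filter_add_sum_filter_not T (fun m => moebius m = 1)]
  have h1 : ∑ m ∈ T.filter (fun m => moebius m = 1), (moebius m : ℤ)
      = ((T.filter (fun m => moebius m = 1)).card : ℤ) := by
    rw [Finset.sum_congr rfl (fun m hm => (Finset.mem_filter.1 hm).2)]
    simp
  have heq : (T.filter (fun m => ¬ moebius m = 1)).filter (fun m => moebius m = -1)
      = T.filter (fun m => moebius m = -1) := by
    rw [Finset.filter_filter]
    refine Finset.filter_congr fun m _ => ?_
    constructor
    · exact fun h => h.2
    · exact fun h => ⟨by rw [h]; decide, h⟩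
  have h2 : ∑ m ∈ T.filter (fun m => ¬ moebius m = 1), (moebius m : ℤ)
      = -(((T.filter (fun m => moebius m = -1)).card : ℤ)) := by
    rw [← Finset.sum_filter_add_sum_filter_not (T.filter (fun m => ¬ moebius m = 1))
      (fun m => moebius m = -1), heq]
    have h3 : ∑ m ∈ T.filter (fun m => moebius m = -1), (moebius m : ℤ)
        = -(((T.filter (fun m => moebius m = -1)).card : ℤ)) := by
      rw [Finset.sum_congr rfl (fun m hm => (Finset.mem_filter.1 hm).2)]
      simp [mul_comm]
    have h4 : ∑ m ∈ (T.filter (fun m => ¬ moebius m = 1)).filter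
        (fun m => ¬ moebius m = -1), (moebius m : ℤ) = 0 := by
      refine Finset.sum_eq_zero fun m hm => ?_
      obtain ⟨hm1, hm2⟩ := Finset.mem_filter.1 hm
      obtain ⟨_, hm3⟩ := Finset.mem_filter.1 hm1
      rcases moebius_trichotomy m with h | h | h
      · exact absurd h hm3
      · exact absurd h hm2
      · exact h
    rw [h3, h4, add_zero]
  rw [h1, h2]
  ring

lemma card_moebius_one {n : ℕ} (hn : 1 < n) :
    (n.divisors.filter (fun m => moebius m = 1)).card = 2 ^ (n.primeFactors.card - 1) ∧
    (n.divisors.filter (fun m => moebius m = -1)).card = 2 ^ (n.primeFactors.card - 1) := by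
  classical
  have hn0 : n ≠ 0 := by omega
  set P := n.divisors.filter (fun m => moebius m = 1) with hP
  set Q := n.divisors.filter (fun m => moebius m = -1) with hQ
  have hPQ : (P.card : ℤ) - Q.card = 0 := by
    rw [← sum_moebius_card, sum_moebius_eq_zero hn]
  have hunion : P.card + Q.card = 2 ^ n.primeFactors.card := by
    rw [← card_squarefree_divisors hn0]
    have hdisj : Disjoint P Q := by
      rw [Finset.disjoint_filter]
      intro m _ h1 h2
      rw [h1] at h2; exact absurd h2 (by decide)
    rw [← Finset.card_union_of_disjoint hdisj]
    congr 1
    ext m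
    simp only [hP, hQ, Finset.mem_union, Finset.mem_filter]
    constructor
    · rintro (⟨hm, h⟩ | ⟨hm, h⟩) <;>
        exact ⟨hm, moebius_ne_zero_iff_squarefree.mp (by rw [h]; decide)⟩
    · rintro ⟨hm, hsq⟩
      rcases moebius_trichotomy m with h | h | h
      · exact Or.inl ⟨hm, h⟩
      · exact Or.inr ⟨hm, h⟩
      · exact absurd h (moebius_ne_zero_iff_squarefree.mpr hsq)
  have hcard : 1 ≤ n.primeFactors.card := by
    have : n.primeFactors.Nonempty := Nat.nonempty_primeFactors.mpr hn
    exact Finset.card_pos.mpr this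
  have h2 : 2 ^ n.primeFactors.card = 2 * 2 ^ (n.primeFactors.card - 1) := by
    rw [← pow_succ']
    congr 1
    omega
  constructor <;> omega

lemma Ee_natAbs_le {n : ℕ} (hn : 0 < n) {S : Finset ℕ} (hS : S ⊆ n.divisors)
    {k : ℕ} (hk : 0 < k) :
    (Ee S k).natAbs ≤ 2 ^ n.primeFactors.card := by
  classical
  have habs : |Ee S k| ≤ ((2 ^ n.primeFactors.card : ℕ) : ℤ) := by
    calc |Ee S k| ≤ ∑ m ∈ S, |if k ∣ m then (moebius (m / k) : ℤ) else 0| :=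
          Finset.abs_sum_le_sum_abs _ _
      _ ≤ ∑ m ∈ n.divisors, |if k ∣ m then (moebius (m / k) : ℤ) else 0| :=
          Finset.sum_le_sum_of_subset_of_nonneg hS (fun _ _ _ => abs_nonneg _)
      _ = ∑ m ∈ n.divisors.filter (fun m => k ∣ m), |(moebius (m / k) : ℤ)| := by
          rw [Finset.sum_filter]
          exact Finset.sum_congr rfl fun m _ => by
            split <;> simp
      _ = ∑ t ∈ (n.divisors.filter (fun m => k ∣ m)).image (fun m => m / k),
            |(moebius t : ℤ)| := by
          rw [Finset.sum_image ?_]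
          intro m hm m' hm' h
          have h1 := (Finset.mem_filter.1 hm).2
          have h2 := (Finset.mem_filter.1 hm').2
          rw [← Nat.div_mul_cancel h1, ← Nat.div_mul_cancel h2, show m / k = m' / k from h]
      _ ≤ ∑ t ∈ n.divisors, |(moebius t : ℤ)| := by
          refine Finset.sum_le_sum_of_subset_of_nonneg ?_ (fun _ _ _ => abs_nonneg _)
          intro t ht
          obtain ⟨m, hm, rfl⟩ := Finset.mem_image.1 ht
          obtain ⟨hmd, hkm⟩ := Finset.mem_filter.1 hm
          obtain ⟨hmn, hn0⟩ := Nat.mem_divisors.1 hmd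
          exact Nat.mem_divisors.mpr ⟨(Nat.div_dvd_of_dvd hkm).trans hmn, hn0⟩
      _ = ∑ t ∈ n.divisors, (if Squarefree t then (1 : ℤ) else 0) := by
          refine Finset.sum_congr rfl fun t _ => ?_
          by_cases h : Squarefree t
          · rw [if_pos h, abs_moebius_eq_one_of_squarefree h]
          · rw [if_neg h, moebius_eq_zero_of_not_squarefree h, abs_zero]
      _ = ((n.divisors.filter Squarefree).card : ℤ) := by
          rw [Finset.sum_boole]
      _ = ((2 ^ n.primeFactors.card : ℕ) : ℤ) := by
          rw [card_squarefree_divisors hn.ne']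
  have := Int.natCast_natAbs (Ee S k) ▸ habs
  exact_mod_cast this

lemma Ee_one_natAbs_le {n : ℕ} (hn : 1 < n) {S : Finset ℕ} (hS : S ⊆ n.divisors) :
    (Ee S 1).natAbs ≤ 2 ^ (n.primeFactors.card - 1) := by
  classical
  have hE : Ee S 1 = ∑ m ∈ S, (moebius m : ℤ) := by
    refine Finset.sum_congr rfl fun m _ => ?_
    rw [if_pos (one_dvd m), Nat.div_one]
  have hsum : Ee S 1 = ((S.filter (fun m => moebius m = 1)).card : ℤ)
      - ((S.filter (fun m => moebius m = -1)).card : ℤ) := hE.trans (sum_moebius_card S)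
  have h1 : (S.filter (fun m => moebius m = 1)).card ≤ 2 ^ (n.primeFactors.card - 1) := by
    rw [← (card_moebius_one hn).1]
    exact Finset.card_le_card (Finset.filter_subset_filter _ hS)
  have h2 : (S.filter (fun m => moebius m = -1)).card ≤ 2 ^ (n.primeFactors.card - 1) := by
    rw [← (card_moebius_one hn).2]
    exact Finset.card_le_card (Finset.filter_subset_filter _ hS)
  omega

-- new material
lemma dom_Fu {k : ℕ} (hk : 0 < k) : Dom (Fu k).val (g k) := by
  intro i
  rw [Fu_val hk, map_sub, PowerSeries.coeff_X_pow, PowerSeries.coeff_one, coeff_g]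
  by_cases h0 : i = 0
  · subst h0
    rw [if_neg (by omega), if_pos rfl, if_pos (dvd_zero k)]
    norm_num
  · rw [if_neg h0]
    by_cases hik : i = k
    · subst hik
      rw [if_pos rfl, if_pos dvd_rfl]
      norm_num
    · rw [if_neg hik]
      split <;> norm_num

lemma mul_neg_g {k : ℕ} (hk : 0 < k) :
    (Fu k).val * (-(g k)) = 1 := by
  rw [Fu_val hk]
  ext i
  rw [show ((PowerSeries.X : PowerSeries ℤ) ^ k - 1) * (-(g k))
      = g k - PowerSeries.X ^ k * g k from by ring]
  rw [map_sub, PowerSeries.coeff_X_pow_mul', coeff_g, PowerSeries.coeff_one]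
  by_cases h0 : i = 0
  · subst h0
    simp [hk.ne', Nat.le_zero]
  · rw [if_neg h0]
    by_cases hki : k ≤ i
    · rw [if_pos hki, coeff_g]
      have hiff : k ∣ i - k ↔ k ∣ i := by
        constructor
        · intro h
          have h2 := Nat.dvd_add h (dvd_refl k)
          rwa [Nat.sub_add_cancel hki] at h2
        · intro h
          exact Nat.dvd_sub h dvd_rfl
      by_cases hd : k ∣ i
      · rw [if_pos hd, if_pos (hiff.mpr hd)]; ring
      · rw [if_neg hd, if_neg (fun hc => hd (hiff.mp hc))]; ring
    · have hnd : ¬ k ∣ i := fun hd => hki (Nat.le_of_dvd (Nat.pos_of_ne_zero h0) hd)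
      rw [if_neg hki, if_neg hnd]
      ring

lemma inv_Fu_val {k : ℕ} (hk : 0 < k) : ((Fu k)⁻¹).val = -(g k) := by
  have h1 := mul_neg_g hk
  calc ((Fu k)⁻¹).val = ((Fu k)⁻¹).val * ((Fu k).val * (-(g k))) := by rw [h1, mul_one]
    _ = (((Fu k)⁻¹ * Fu k : (PowerSeries ℤ)ˣ) : PowerSeries ℤ) * (-(g k)) := by
        rw [Units.val_mul, mul_assoc]
    _ = -(g k) := by rw [inv_mul_cancel]; simp

lemma dom_inv_Fu {k : ℕ} (hk : 0 < k) : Dom ((Fu k)⁻¹).val (g k) := by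
  intro i
  rw [inv_Fu_val hk, map_neg, abs_neg, coeff_g]
  split <;> norm_num

lemma dom_Fu_zpow_aux {k : ℕ} (hk : 0 < k) (E : ℤ) (a : ℕ)
    (h : E = (a : ℤ) ∨ E = -(a : ℤ)) :
    Dom ((Fu k ^ E).val) (g k ^ a) := by
  rcases h with h | h
  · rw [h, zpow_natCast, Units.val_pow_eq_pow_val]
    exact (dom_Fu hk).pow _
  · rw [h, zpow_neg, zpow_natCast, ← inv_pow, Units.val_pow_eq_pow_val]
    exact (dom_inv_Fu hk).pow _

lemma dom_Fu_zpow {k : ℕ} (hk : 0 < k) (E : ℤ) :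
    Dom ((Fu k ^ E).val) (g k ^ E.natAbs) :=
  dom_Fu_zpow_aux hk E E.natAbs (Int.natAbs_eq E)

/-- number of decompositions used in the counting bound -/
def Nc (r j : ℕ) : ℕ := ((Finset.Icc 2 r).finsuppAntidiag j).card

/-- the integer upper bound -/
noncomputable def Mb (r ν : ℕ) : ℤ :=
  ∑ p ∈ Finset.HasAntidiagonal.antidiagonal r, ((2 ^ (ν - 1) + p.1).choose p.1 : ℤ) *
    (if p.2 = 0 then 1 else (Nc r p.2 : ℤ) * ((2 : ℤ) ^ ν + 1) ^ (p.2 - 1))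

lemma coeff_P_bound {r j A : ℕ} (hj1 : 1 ≤ j) (hjr : j ≤ r) {s' : Finset ℕ}
    (hs' : ∀ k ∈ s', 2 ≤ k) {e : ℕ → ℕ} (he : ∀ k ∈ s', e k ≤ A) :
    (PowerSeries.coeff j) (∏ k ∈ s', g k ^ e k)
      ≤ (Nc r j : ℤ) * ((A : ℤ) + 1) ^ (j - 1) := by
  rw [PowerSeries.coeff_prod]
  set T := s'.finsuppAntidiag j with hT
  have hzero : ∀ l ∈ T, (∏ k ∈ s', (PowerSeries.coeff (l k)) (g k ^ e k)) ≠ 0 →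
      (∀ k ∈ s', k ∣ l k) := by
    intro l _ hne k hk
    by_contra hnd
    exact hne (Finset.prod_eq_zero hk (coeff_g_pow_eq_zero _ hnd))
  rw [← Finset.sum_filter_of_ne hzero]
  set F := T.filter (fun l => ∀ k ∈ s', k ∣ l k) with hF
  have hcard : F.card ≤ Nc r j := by
    apply Finset.card_le_card
    intro l hl
    obtain ⟨hlT, hgood⟩ := Finset.mem_filter.1 hl
    obtain ⟨hsum', hsupp⟩ := (Finset.mem_finsuppAntidiag').1 hlT
    obtain ⟨hsum, -⟩ := (Finset.mem_finsuppAntidiag).1 hlT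
    refine (Finset.mem_finsuppAntidiag').2 ⟨hsum', ?_⟩
    intro k hk
    have hks' : k ∈ s' := hsupp hk
    have hlk0 : l k ≠ 0 := Finsupp.mem_support_iff.1 hk
    have hkle : k ≤ l k := Nat.le_of_dvd (Nat.pos_of_ne_zero hlk0) (hgood k hks')
    have hlkj : l k ≤ j := by
      rw [← hsum]
      exact Finset.single_le_sum (fun _ _ => Nat.zero_le _) hks'
    exact Finset.mem_Icc.mpr ⟨hs' k hks', by omega⟩
  have hterm : ∀ l ∈ F, ∏ k ∈ s', (PowerSeries.coeff (l k)) (g k ^ e k)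
      ≤ ((A : ℤ) + 1) ^ (j - 1) := by
    intro l hl
    obtain ⟨hlT, hgood⟩ := Finset.mem_filter.1 hl
    obtain ⟨hsum, -⟩ := (Finset.mem_finsuppAntidiag).1 hlT
    have step1 : ∏ k ∈ s', (PowerSeries.coeff (l k)) (g k ^ e k)
        ≤ ∏ k ∈ s', ((A : ℤ) + 1) ^ (l k / k) := by
      refine Finset.prod_le_prod (fun k _ => NN.pow (NN.g k) _ _) (fun k hk => ?_)
      refine (coeff_g_pow_le (by have := hs' k hk; omega) _ _).trans ?_
      have h1 : ((e k : ℤ) + 1) ≤ ((A : ℤ) + 1) := by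
        have := he k hk; omega
      exact pow_le_pow_left₀ (by positivity) h1 _
    refine step1.trans ?_
    rw [Finset.prod_pow_eq_pow_sum]
    have hexp : ∑ k ∈ s', l k / k ≤ j - 1 := by
      have h2t : ∀ k ∈ s', 2 * (l k / k) ≤ l k := by
        intro k hk
        have hmul := Nat.div_mul_cancel (hgood k hk)
        have h2k := hs' k hk
        calc 2 * (l k / k) = (l k / k) * 2 := by ring
          _ ≤ (l k / k) * k := Nat.mul_le_mul_left _ h2k
          _ = l k := hmul
      have hS2 : 2 * (∑ k ∈ s', l k / k) ≤ j := by
        rw [Finset.mul_sum, ← hsum]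
        exact Finset.sum_le_sum h2t
      have hSpos : ∑ k ∈ s', l k / k ≠ 0 := by
        intro h0
        have hall : ∀ k ∈ s', l k / k = 0 :=
          fun k hk => (Finset.sum_eq_zero_iff.1 h0) k hk
        have : ∀ k ∈ s', l k = 0 := by
          intro k hk
          have hmul := Nat.div_mul_cancel (hgood k hk)
          rw [hall k hk, zero_mul] at hmul
          omega
        have hj0 : j = 0 := by
          rw [← hsum]
          exact Finset.sum_eq_zero this
        omega
      omega
    exact pow_le_pow_right₀ (by omega) hexp
  calc ∑ l ∈ F, ∏ k ∈ s', (PowerSeries.coeff (l k)) (g k ^ e k)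
      ≤ ∑ _l ∈ F, ((A : ℤ) + 1) ^ (j - 1) := Finset.sum_le_sum hterm
    _ = (F.card : ℤ) * ((A : ℤ) + 1) ^ (j - 1) := by
        rw [Finset.sum_const, nsmul_eq_mul]
    _ ≤ (Nc r j : ℤ) * ((A : ℤ) + 1) ^ (j - 1) := by
        have : (F.card : ℤ) ≤ (Nc r j : ℤ) := by exact_mod_cast hcard
        exact mul_le_mul_of_nonneg_right this (by positivity)

lemma coeff_prod_g_bound {n : ℕ} (hn : 1 < n) (r : ℕ) (e : ℕ → ℕ)
    (h1 : e 1 ≤ 2 ^ (n.primeFactors.card - 1))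
    (hA : ∀ k, e k ≤ 2 ^ n.primeFactors.card) :
    PowerSeries.coeff r (∏ k ∈ n.divisors, g k ^ e k) ≤ Mb r n.primeFactors.card := by
  classical
  set ν := n.primeFactors.card with hν
  have h1mem : (1 : ℕ) ∈ n.divisors := Nat.one_mem_divisors.mpr (by omega)
  rw [← Finset.mul_prod_erase _ _ h1mem, PowerSeries.coeff_mul, Mb]
  refine Finset.sum_le_sum ?_
  intro p hp
  have hpsum : p.1 + p.2 = r := Finset.HasAntidiagonal.mem_antidiagonal.1 hp
  have hf1 : (PowerSeries.coeff p.1) (g 1 ^ e 1) ≤ ((2 ^ (ν - 1) + p.1).choose p.1 : ℤ) := by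
    refine (coeff_g_one_pow_le _ _).trans ?_
    exact_mod_cast Nat.choose_le_choose p.1 (by omega)
  have hf1nn : 0 ≤ (PowerSeries.coeff p.1) (g 1 ^ e 1) := NN.pow (NN.g 1) _ p.1
  have hPnn : 0 ≤ (PowerSeries.coeff p.2) (∏ k ∈ n.divisors.erase 1, g k ^ e k) :=
    NN.prod (fun k _ => NN.pow (NN.g k) _) p.2
  by_cases h2 : p.2 = 0
  · rw [if_pos h2, h2]
    have hc0 : (PowerSeries.coeff 0) (∏ k ∈ n.divisors.erase 1, g k ^ e k) = 1 := by
      rw [PowerSeries.coeff_zero_eq_constantCoeff, map_prod]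
      refine Finset.prod_eq_one fun k _ => ?_
      rw [← PowerSeries.coeff_zero_eq_constantCoeff]
      exact coeff_zero_g_pow k (e k)
    rw [hc0, mul_one, mul_one]
    exact hf1
  · rw [if_neg h2]
    have hs' : ∀ k ∈ n.divisors.erase 1, 2 ≤ k := by
      intro k hk
      have hne := Finset.ne_of_mem_erase hk
      have hpos := Nat.pos_of_mem_divisors (Finset.mem_of_mem_erase hk)
      omega
    have hsecond := coeff_P_bound (r := r) (j := p.2) (A := 2 ^ ν) (by omega) (by omega) hs'
      (fun k _ => hA k) (e := e)
    push_cast at hsecond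
    exact mul_le_mul hf1 hsecond hPnn (by positivity)

lemma Ee_natAbs_le' {n : ℕ} (hn : 0 < n) {S : Finset ℕ} (hS : S ⊆ n.divisors) (k : ℕ) :
    (Ee S k).natAbs ≤ 2 ^ n.primeFactors.card := by
  rcases Nat.eq_zero_or_pos k with rfl | hk
  · have : Ee S 0 = 0 := by
      refine Finset.sum_eq_zero fun m hm => ?_
      rw [if_neg]
      intro h0
      have hm0 : m ≠ 0 := (Nat.pos_of_mem_divisors (hS hm)).ne'
      exact hm0 (Nat.eq_zero_of_zero_dvd h0)
    rw [this]
    simp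
  · exact Ee_natAbs_le hn hS hk

lemma key {n : ℕ} (hn : 1 < n) (r : ℕ) {d : Polynomial ℤ}
    (hd : d ∣ Polynomial.X ^ n - 1) :
    |d.coeff r| ≤ Mb r n.primeFactors.card := by
  have hn0 : 0 < n := by omega
  obtain ⟨S, hS, c, hc, hdc⟩ := divisor_eq_prod_cyclotomic hn0 hd
  have habs : |d.coeff r| = |(∏ m ∈ S, cyclotomic m ℤ).coeff r| := by
    rw [← hdc, Polynomial.coeff_mul_C]
    rcases hc with rfl | rfl <;> simp [abs_mul]
  rw [habs, ← Polynomial.coeff_coe]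
  have hprod : ((∏ m ∈ S, cyclotomic m ℤ : Polynomial ℤ) : PowerSeries ℤ)
      = ∏ k ∈ n.divisors, ((Fu k ^ (Ee S k) : (PowerSeries ℤ)ˣ) : PowerSeries ℤ) := by
    have h1 : ((∏ m ∈ S, cyclotomic m ℤ : Polynomial ℤ) : PowerSeries ℤ)
        = ∏ m ∈ S, ((cyclotomic m ℤ : Polynomial ℤ) : PowerSeries ℤ) := by
      have h3 := map_prod (Polynomial.coeToPowerSeries.ringHom (R := ℤ))
        (fun m => cyclotomic m ℤ) S
      simp only [Polynomial.coeToPowerSeries.ringHom_apply] at h3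
      exact h3
    have h2 : ∏ m ∈ S, ((cyclotomic m ℤ : Polynomial ℤ) : PowerSeries ℤ)
        = ∏ m ∈ S, (Gu m).val :=
      Finset.prod_congr rfl fun m hm => (Gu_val (Nat.pos_of_mem_divisors (hS hm))).symm
    have h4 : (∏ m ∈ S, (Gu m).val)
        = ((∏ m ∈ S, Gu m : (PowerSeries ℤ)ˣ) : PowerSeries ℤ) :=
      (map_prod (Units.coeHom (PowerSeries ℤ)) _ _).symm
    rw [h1, h2, h4, prod_Gu_S hn0 hS]
    exact map_prod (Units.coeHom (PowerSeries ℤ)) _ _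
  rw [hprod]
  have hdom : Dom (∏ k ∈ n.divisors, ((Fu k ^ (Ee S k) : (PowerSeries ℤ)ˣ) : PowerSeries ℤ))
      (∏ k ∈ n.divisors, g k ^ (Ee S k).natAbs) :=
    Dom.prod fun k hk => dom_Fu_zpow (Nat.pos_of_mem_divisors hk) _
  refine (hdom r).trans ?_
  exact coeff_prod_g_bound hn r (fun k => (Ee S k).natAbs)
    (Ee_one_natAbs_le hn hS) (Ee_natAbs_le' hn0 hS)

lemma aux_real (x c : ℝ) (hx : 1 ≤ x) (hc : 0 ≤ c) (m : ℕ) :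
    (x + c) ^ m * x ≤ x ^ (m + 1) + ((1 + c) ^ m - 1) * x ^ m := by
  induction m with
  | zero => simp
  | succ m ih =>
    have hx0 : (0 : ℝ) < x := by linarith
    have hxc : (0 : ℝ) ≤ x + c := by linarith
    have hKnn : (0 : ℝ) ≤ (1 + c) ^ m - 1 := by
      have h := one_le_pow₀ (by linarith : (1:ℝ) ≤ 1 + c) (n := m)
      linarith
    have hmono : x ^ m ≤ x ^ (m + 1) := pow_le_pow_right₀ hx (by omega)
    calc (x + c) ^ (m + 1) * x = (x + c) * ((x + c) ^ m * x) := by ring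
      _ ≤ (x + c) * (x ^ (m + 1) + ((1 + c) ^ m - 1) * x ^ m) :=
          mul_le_mul_of_nonneg_left ih hxc
      _ = x ^ (m + 2) + c * x ^ (m + 1) + ((1 + c) ^ m - 1) * x ^ (m + 1)
            + c * (((1 + c) ^ m - 1) * x ^ m) := by ring
      _ ≤ x ^ (m + 2) + c * x ^ (m + 1) + ((1 + c) ^ m - 1) * x ^ (m + 1)
            + c * (((1 + c) ^ m - 1) * x ^ (m + 1)) := by
          have := mul_le_mul_of_nonneg_left hmono hKnn
          nlinarith
      _ = x ^ (m + 1 + 1) + ((1 + c) ^ (m + 1) - 1) * x ^ (m + 1) := by ring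

lemma pow_split (x c : ℝ) (hx : 1 ≤ x) (hc : 0 ≤ c) (m : ℕ) :
    (x + c) ^ m ≤ x ^ m + (1 + c) ^ m * x ^ (m - 1) := by
  rcases m with - | mm
  · have h1 : (0:ℝ) ≤ (1 + c) ^ 0 * x ^ (0-1) := by positivity
    simpa using by linarith
  · have h := aux_real x c hx hc (mm + 1)
    have hx0 : (0 : ℝ) < x := by linarith
    have hp : (0:ℝ) ≤ x ^ (mm + 1) := by positivity
    have hrhs : x ^ (mm + 1 + 1) + ((1 + c) ^ (mm + 1) - 1) * x ^ (mm + 1)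
        ≤ (x ^ (mm + 1) + (1 + c) ^ (mm + 1) * x ^ (mm + 1 - 1)) * x := by
      have : (x ^ (mm + 1) + (1 + c) ^ (mm + 1) * x ^ mm) * x
          = x ^ (mm + 1 + 1) + (1 + c) ^ (mm + 1) * x ^ (mm + 1) := by ring
      simp only [Nat.add_sub_cancel]
      rw [this]
      linarith
    exact le_of_mul_le_mul_right (h.trans hrhs) hx0

lemma main_choose_bound (r ν : ℕ) (hν : 1 ≤ ν) :
    ((2 ^ (ν - 1) + r).choose r : ℝ)
      ≤ (2 : ℝ) ^ (r * ν) / (2 ^ r * r.factorial)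
        + ((1 : ℝ) + r) ^ r * 2 ^ ((r - 1) * ν) := by
  have hx1 : (1 : ℝ) ≤ (2 : ℝ) ^ (ν - 1) := one_le_pow₀ (by norm_num)
  have hrf : (1 : ℝ) ≤ (r.factorial : ℝ) := by exact_mod_cast r.factorial_pos
  have h1 : ((2 ^ (ν - 1) + r).choose r : ℝ)
      ≤ ((2 : ℝ) ^ (ν - 1) + r) ^ r / r.factorial := by
    have h := Nat.choose_le_pow_div (α := ℝ) r (2 ^ (ν - 1) + r)
    exact le_of_le_of_eq h (by norm_num)
  have h2 : ((2 : ℝ) ^ (ν - 1) + r) ^ r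
      ≤ ((2 : ℝ) ^ (ν - 1)) ^ r + ((1 : ℝ) + r) ^ r * ((2 : ℝ) ^ (ν - 1)) ^ (r - 1) :=
    pow_split _ _ hx1 (by positivity) r
  have hexp : (ν - 1) * r + r = r * ν := by
    obtain ⟨νν, rfl⟩ : ∃ νν, ν = νν + 1 := ⟨ν - 1, by omega⟩
    simp only [Nat.add_sub_cancel]
    ring
  have hxr : ((2 : ℝ) ^ (ν - 1)) ^ r = (2 : ℝ) ^ (r * ν) / 2 ^ r := by
    rw [← pow_mul, eq_div_iff (by positivity), ← pow_add, hexp]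
  have hxr1 : ((2 : ℝ) ^ (ν - 1)) ^ (r - 1) ≤ (2 : ℝ) ^ ((r - 1) * ν) := by
    rw [← pow_mul]
    refine pow_le_pow_right₀ (by norm_num) ?_
    calc (ν - 1) * (r - 1) ≤ ν * (r - 1) := Nat.mul_le_mul_right _ (by omega)
      _ = (r - 1) * ν := by ring
  calc ((2 ^ (ν - 1) + r).choose r : ℝ)
      ≤ ((2 : ℝ) ^ (ν - 1) + r) ^ r / r.factorial := h1
    _ ≤ (((2 : ℝ) ^ (ν - 1)) ^ r + ((1 : ℝ) + r) ^ r * ((2 : ℝ) ^ (ν - 1)) ^ (r - 1))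
          / r.factorial := by gcongr
    _ ≤ (2 : ℝ) ^ (r * ν) / (2 ^ r * r.factorial) + ((1 : ℝ) + r) ^ r * 2 ^ ((r - 1) * ν) := by
        rw [add_div, hxr, div_div]
        have hY : (((1 : ℝ) + r) ^ r * ((2 : ℝ) ^ (ν - 1)) ^ (r - 1)) / r.factorial
            ≤ ((1 : ℝ) + r) ^ r * ((2 : ℝ) ^ (ν - 1)) ^ (r - 1) :=
          div_le_self (by positivity) hrf
        have hY2 : ((1 : ℝ) + r) ^ r * ((2 : ℝ) ^ (ν - 1)) ^ (r - 1)
            ≤ ((1 : ℝ) + r) ^ r * (2 : ℝ) ^ ((r - 1) * ν) :=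
          mul_le_mul_of_nonneg_left hxr1 (by positivity)
        linarith

lemma other_bound (r ν p1 p2 : ℕ) (hν : 1 ≤ ν) (hps : p1 + p2 = r) (hp2 : p2 ≠ 0) :
    ((2 ^ (ν - 1) + p1).choose p1 : ℝ) * ((Nc r p2 : ℝ) * ((2 : ℝ) ^ ν + 1) ^ (p2 - 1))
      ≤ (Nc r p2 : ℝ) * (((r : ℝ) + 2) ^ (r - 1) * 2 ^ ((r - 1) * ν)) := by
  have h2ν : (1 : ℝ) ≤ (2 : ℝ) ^ ν := one_le_pow₀ (by norm_num)
  set B : ℝ := (2 : ℝ) ^ ν + ((r : ℝ) + 1) with hB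
  have hBnn : (0 : ℝ) ≤ B := by positivity
  have hc : ((2 ^ (ν - 1) + p1).choose p1 : ℝ) ≤ B ^ p1 := by
    calc ((2 ^ (ν - 1) + p1).choose p1 : ℝ) ≤ ((2 ^ (ν - 1) + p1 : ℕ) : ℝ) ^ p1 := by
          exact_mod_cast Nat.choose_le_pow (2 ^ (ν - 1) + p1) p1
      _ ≤ B ^ p1 := by
          refine pow_le_pow_left₀ (by positivity) ?_ _
          push_cast
          have hh : (2 : ℝ) ^ (ν - 1) ≤ (2 : ℝ) ^ ν := pow_le_pow_right₀ (by norm_num) (by omega)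
          have hp1r : (p1 : ℝ) ≤ (r : ℝ) := by exact_mod_cast Nat.le.intro hps
          linarith
  have hb2 : ((2 : ℝ) ^ ν + 1) ^ (p2 - 1) ≤ B ^ (p2 - 1) := by
    refine pow_le_pow_left₀ (by positivity) ?_ _
    have : (0 : ℝ) ≤ (r : ℝ) := by positivity
    rw [hB]; linarith
  have hBB : B ^ p1 * B ^ (p2 - 1) = B ^ (r - 1) := by
    rw [← pow_add]
    congr 1
    omega
  have hBle : B ≤ ((r : ℝ) + 2) * 2 ^ ν := by
    have h1 : ((r : ℝ) + 1) * 1 ≤ ((r : ℝ) + 1) * 2 ^ ν :=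
      mul_le_mul_of_nonneg_left h2ν (by positivity)
    rw [hB]; nlinarith
  have hBpow : B ^ (r - 1) ≤ (((r : ℝ) + 2) ^ (r - 1) * 2 ^ ((r - 1) * ν)) := by
    calc B ^ (r - 1) ≤ (((r : ℝ) + 2) * 2 ^ ν) ^ (r - 1) := pow_le_pow_left₀ hBnn hBle _
      _ = ((r : ℝ) + 2) ^ (r - 1) * ((2 : ℝ) ^ ν) ^ (r - 1) := mul_pow _ _ _
      _ = ((r : ℝ) + 2) ^ (r - 1) * 2 ^ ((r - 1) * ν) := by
          rw [← pow_mul, mul_comm ν (r - 1)]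
  calc ((2 ^ (ν - 1) + p1).choose p1 : ℝ) * ((Nc r p2 : ℝ) * ((2 : ℝ) ^ ν + 1) ^ (p2 - 1))
      ≤ B ^ p1 * ((Nc r p2 : ℝ) * B ^ (p2 - 1)) := by
        refine mul_le_mul hc (mul_le_mul_of_nonneg_left hb2 (by positivity)) (by positivity)
          (by positivity)
    _ = (Nc r p2 : ℝ) * (B ^ p1 * B ^ (p2 - 1)) := by ring
    _ = (Nc r p2 : ℝ) * B ^ (r - 1) := by rw [hBB]
    _ ≤ (Nc r p2 : ℝ) * (((r : ℝ) + 2) ^ (r - 1) * 2 ^ ((r - 1) * ν)) :=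
        mul_le_mul_of_nonneg_left hBpow (by positivity)

lemma Mb_real_bound (r ν : ℕ) (hν : 1 ≤ ν) :
    ((Mb r ν : ℤ) : ℝ)
      ≤ (2 : ℝ) ^ (r * ν) / (2 ^ r * r.factorial)
        + (((1 : ℝ) + r) ^ r
            + (∑ p ∈ Finset.HasAntidiagonal.antidiagonal r, (Nc r p.2 : ℝ)) * ((r : ℝ) + 2) ^ (r - 1))
          * 2 ^ ((r - 1) * ν) := by
  classical
  have hcast : ((Mb r ν : ℤ) : ℝ)
      = ∑ p ∈ Finset.HasAntidiagonal.antidiagonal r, ((2 ^ (ν - 1) + p.1).choose p.1 : ℝ) *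
          (if p.2 = 0 then (1 : ℝ) else (Nc r p.2 : ℝ) * ((2 : ℝ) ^ ν + 1) ^ (p.2 - 1)) := by
    rw [Mb]
    push_cast
    refine Finset.sum_congr rfl fun p _ => ?_
    split <;> push_cast <;> ring
  have hmem : ((r, 0) : ℕ × ℕ) ∈ Finset.HasAntidiagonal.antidiagonal r := by
    rw [Finset.HasAntidiagonal.mem_antidiagonal]
    simp
  rw [hcast, ← Finset.add_sum_erase _ _ hmem]
  have hhead : ((2 ^ (ν - 1) + (r, 0).1).choose (r, 0).1 : ℝ) *
      (if ((r, 0) : ℕ × ℕ).2 = 0 then (1 : ℝ)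
        else (Nc r ((r, 0) : ℕ × ℕ).2 : ℝ) * ((2 : ℝ) ^ ν + 1) ^ (((r, 0) : ℕ × ℕ).2 - 1))
      ≤ (2 : ℝ) ^ (r * ν) / (2 ^ r * r.factorial)
        + ((1 : ℝ) + r) ^ r * 2 ^ ((r - 1) * ν) := by
    rw [if_pos rfl, mul_one]
    exact main_choose_bound r ν hν
  have htail : ∑ p ∈ (Finset.HasAntidiagonal.antidiagonal r).erase (r, 0),
      ((2 ^ (ν - 1) + p.1).choose p.1 : ℝ) *
        (if p.2 = 0 then (1 : ℝ) else (Nc r p.2 : ℝ) * ((2 : ℝ) ^ ν + 1) ^ (p.2 - 1))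
      ≤ (∑ p ∈ Finset.HasAntidiagonal.antidiagonal r, (Nc r p.2 : ℝ)) * ((r : ℝ) + 2) ^ (r - 1)
          * 2 ^ ((r - 1) * ν) := by
    have hterm : ∀ p ∈ (Finset.HasAntidiagonal.antidiagonal r).erase (r, 0),
        ((2 ^ (ν - 1) + p.1).choose p.1 : ℝ) *
          (if p.2 = 0 then (1 : ℝ) else (Nc r p.2 : ℝ) * ((2 : ℝ) ^ ν + 1) ^ (p.2 - 1))
        ≤ (Nc r p.2 : ℝ) * (((r : ℝ) + 2) ^ (r - 1) * 2 ^ ((r - 1) * ν)) := by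
      intro p hp
      have hpa := Finset.mem_of_mem_erase hp
      have hps : p.1 + p.2 = r := Finset.HasAntidiagonal.mem_antidiagonal.1 hpa
      have hpne := Finset.ne_of_mem_erase hp
      have hp2 : p.2 ≠ 0 := by
        intro h0
        apply hpne
        have : p.1 = r := by omega
        exact Prod.ext this h0
      rw [if_neg hp2]
      exact other_bound r ν p.1 p.2 hν hps hp2
    calc ∑ p ∈ (Finset.HasAntidiagonal.antidiagonal r).erase (r, 0),
        ((2 ^ (ν - 1) + p.1).choose p.1 : ℝ) *
          (if p.2 = 0 then (1 : ℝ) else (Nc r p.2 : ℝ) * ((2 : ℝ) ^ ν + 1) ^ (p.2 - 1))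
        ≤ ∑ p ∈ (Finset.HasAntidiagonal.antidiagonal r).erase (r, 0),
            (Nc r p.2 : ℝ) * (((r : ℝ) + 2) ^ (r - 1) * 2 ^ ((r - 1) * ν)) :=
          Finset.sum_le_sum hterm
      _ ≤ ∑ p ∈ Finset.HasAntidiagonal.antidiagonal r,
            (Nc r p.2 : ℝ) * (((r : ℝ) + 2) ^ (r - 1) * 2 ^ ((r - 1) * ν)) :=
          Finset.sum_le_sum_of_subset_of_nonneg (Finset.erase_subset _ _)
            (fun _ _ _ => by positivity)
      _ = (∑ p ∈ Finset.HasAntidiagonal.antidiagonal r, (Nc r p.2 : ℝ)) * ((r : ℝ) + 2) ^ (r - 1)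
            * 2 ^ ((r - 1) * ν) := by
          rw [← Finset.sum_mul]
          ring
  calc _ ≤ ((2 : ℝ) ^ (r * ν) / (2 ^ r * r.factorial)
        + ((1 : ℝ) + r) ^ r * 2 ^ ((r - 1) * ν))
        + (∑ p ∈ Finset.HasAntidiagonal.antidiagonal r, (Nc r p.2 : ℝ)) * ((r : ℝ) + 2) ^ (r - 1)
          * 2 ^ ((r - 1) * ν) := add_le_add hhead htail
    _ = _ := by ring


end HProof

/-- `H r n` is the maximal absolute value of the coefficient of `x^r` over all divisors of
`x^n - 1` in `ℤ[x]`. -/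
noncomputable def H (r n : ℕ) : ℤ :=
  sSup {c : ℤ | ∃ d : Polynomial ℤ, d ∣ Polynomial.X ^ n - 1 ∧ c = |d.coeff r|}

/-- There is a constant `c₁ = c₁(r)` such that for all `n > 1`,
`H r n ≤ 2^(r·ν(n)) / (2^r · r!) + c₁ · 2^((r-1)·ν(n))`. -/
theorem H_upper_bound (r : ℕ) :
    ∃ c₁ : ℝ, ∀ n : ℕ, 1 < n →
      (H r n : ℝ) ≤ (2 : ℝ) ^ (r * n.primeFactors.card) / (2 ^ r * r.factorial) +
        c₁ * 2 ^ ((r - 1) * n.primeFactors.card) := by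
  refine ⟨((1 : ℝ) + r) ^ r
    + (∑ p ∈ Finset.HasAntidiagonal.antidiagonal r, (HProof.Nc r p.2 : ℝ)) * ((r : ℝ) + 2) ^ (r - 1), ?_⟩
  intro n hn
  have hν1 : 1 ≤ n.primeFactors.card :=
    Finset.card_pos.mpr (Nat.nonempty_primeFactors.mpr hn)
  have hH : H r n ≤ HProof.Mb r n.primeFactors.card := by
    apply csSup_le
    · exact ⟨|(1 : Polynomial ℤ).coeff r|, 1, one_dvd _, rfl⟩
    · rintro c ⟨d, hd, rfl⟩
      exact HProof.key hn r hd
  have h2 := HProof.Mb_real_bound r n.primeFactors.card hν1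
  have h3 : (H r n : ℝ) ≤ ((HProof.Mb r n.primeFactors.card : ℤ) : ℝ) := by exact_mod_cast hH
  exact h3.trans h2
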